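/- Let p > 0 be real, ε ∈ (0,1], and let k ≥ 1 be an integer. Let f ∈ ℝ^n, and let S ⊆ T ⊆ {1,…,n} with |T| = k and |S| ≥ (1 − ε/4)·k, where S consists of largest-magnitude coordinates of f in the sense that |f_i| ≥ |f_j| for every i ∈ S and every j ∉ S. Let g be obtained from f by zeroing the coordinates in T and h be obtained from f by zeroing the coordinates in S. Then 0 ≤ ‖h‖_p^p − ‖g‖_p^p ≤ (ε/3)·‖f‖_p^p. -/

import Mathlib

/-- Let `S ⊆ T ⊆ {1,…,n}` with `|T| = k`, `|S| ≥ (1 − ε/4)·k`, where the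
coordinates of `f` indexed by `S` dominate in magnitude all coordinates outside `S`.
Let `g` zero out the coordinates in `T` and `h` zero out the coordinates in `S`. Then
`0 ≤ ‖h‖_p^p − ‖g‖_p^p ≤ (ε/3)·‖f‖_p^p`. -/
theorem stmt_6 (n : ℕ) (p ε : ℝ) (k : ℕ) (hp : 0 < p) (hε0 : 0 < ε) (hε1 : ε ≤ 1)
    (hk : 1 ≤ k)
    (f : Fin n → ℝ) (S T : Finset (Fin n)) (hST : S ⊆ T)
    (hT : T.card = k) (hS : (1 - ε / 4) * (k : ℝ) ≤ (S.card : ℝ))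
    (htop : ∀ i ∈ S, ∀ j ∉ S, |f j| ≤ |f i|)
    (g h : Fin n → ℝ)
    (hg : ∀ i, g i = if i ∈ T then 0 else f i)
    (hh : ∀ i, h i = if i ∈ S then 0 else f i) :
    0 ≤ (∑ i, |h i| ^ p) - ∑ i, |g i| ^ p ∧
    (∑ i, |h i| ^ p) - ∑ i, |g i| ^ p ≤ ε / 3 * ∑ i, |f i| ^ p := by
  have hpow0 : (0:ℝ) ^ p = 0 := Real.zero_rpow (ne_of_gt hp)
  set A := T \ S with hA
  have hpt : ∀ i, |h i| ^ p - |g i| ^ p = if i ∈ A then |f i| ^ p else 0 := by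
    intro i
    rw [hg i, hh i]
    by_cases hiS : i ∈ S
    · have hiT : i ∈ T := hST hiS
      simp [hA, hiS, hiT, Finset.mem_sdiff]
    · by_cases hiT : i ∈ T
      · simp [hA, hiS, hiT, Finset.mem_sdiff, hpow0]
      · simp [hA, hiS, hiT, Finset.mem_sdiff]
  have hdiff : (∑ i, |h i| ^ p) - ∑ i, |g i| ^ p = ∑ i ∈ A, |f i| ^ p := by
    rw [← Finset.sum_sub_distrib]
    calc ∑ i, (|h i| ^ p - |g i| ^ p) = ∑ i, (if i ∈ A then |f i| ^ p else 0) := by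
          exact Finset.sum_congr rfl (fun i _ => hpt i)
      _ = ∑ i ∈ A, |f i| ^ p := by
          rw [Finset.sum_ite_mem, Finset.univ_inter]
  have hnonneg : ∀ (B : Finset (Fin n)), 0 ≤ ∑ i ∈ B, |f i| ^ p := by
    intro B
    exact Finset.sum_nonneg fun i _ => Real.rpow_nonneg (abs_nonneg _) p
  rw [hdiff]
  refine ⟨hnonneg A, ?_⟩
  -- cardinalities
  have hScard_pos : (0:ℝ) < S.card := by
    have h34 : (3/4 : ℝ) ≤ 1 - ε / 4 := by linarith
    have : (3/4 : ℝ) * 1 ≤ (1 - ε/4) * k := by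
      apply mul_le_mul h34 (by exact_mod_cast hk) one_pos.le (by linarith)
    linarith
  have hTScard : S.card ≤ k := by rw [← hT]; exact Finset.card_le_card hST
  have hAcard : (A.card : ℝ) = (k : ℝ) - S.card := by
    rw [hA, Finset.card_sdiff_of_subset hST, hT, Nat.cast_sub hTScard]
  have hAle : (A.card : ℝ) ≤ ε / 3 * S.card := by
    have h1 : (A.card : ℝ) ≤ ε / 4 * k := by rw [hAcard]; nlinarith
    have h2 : ε / 4 * k ≤ ε / 3 * S.card := by nlinarith
    linarith
  -- key comparison: S.card * ∑_A ≤ A.card * ∑_S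
  have hkey : (S.card : ℝ) * ∑ i ∈ A, |f i| ^ p ≤ (A.card : ℝ) * ∑ j ∈ S, |f j| ^ p := by
    rw [Finset.card_eq_sum_ones S, Finset.card_eq_sum_ones A]
    push_cast
    rw [Finset.sum_mul, Finset.sum_mul]
    simp only [one_mul]
    rw [Finset.sum_comm]
    apply Finset.sum_le_sum
    intro i hiA
    have hiS : i ∉ S := (Finset.mem_sdiff.mp hiA).2
    apply Finset.sum_le_sum
    intro j hjS
    exact Real.rpow_le_rpow (abs_nonneg _) (htop j hjS i hiS) hp.le
  have hsum_le : ∑ j ∈ S, |f j| ^ p ≤ ∑ i, |f i| ^ p := by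
    apply Finset.sum_le_sum_of_subset_of_nonneg (Finset.subset_univ S)
    intro i _ _; exact Real.rpow_nonneg (abs_nonneg _) p
  have hstep : ∑ i ∈ A, |f i| ^ p ≤ ε / 3 * ∑ j ∈ S, |f j| ^ p := by
    rw [← mul_le_mul_iff_right₀ hScard_pos]
    calc (S.card : ℝ) * ∑ i ∈ A, |f i| ^ p ≤ (A.card : ℝ) * ∑ j ∈ S, |f j| ^ p := hkey
      _ ≤ (ε / 3 * S.card) * ∑ j ∈ S, |f j| ^ p := by
          apply mul_le_mul_of_nonneg_right hAle (hnonneg S)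
      _ = (S.card : ℝ) * (ε / 3 * ∑ j ∈ S, |f j| ^ p) := by ring
  calc ∑ i ∈ A, |f i| ^ p ≤ ε / 3 * ∑ j ∈ S, |f j| ^ p := hstep
    _ ≤ ε / 3 * ∑ i, |f i| ^ p := by
        apply mul_le_mul_of_nonneg_left hsum_le (by linarith)
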